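/- Let X ⊆ P^n be a 0-dimensional scheme avoiding Z^+(X_0), with x_0 a non-zerodivisor on R_X. Then the annihilator of dx_0 in Ω^1_{R_X/K} is zero, and consequently HF_{Ω^1_{R_X/K[x_0]}}(i) = HF_{Ω^1_{R_X/K}}(i) - HF_X(i-1) for all i ∈ ℤ. -/

import Mathlib

open MvPolynomial
set_option maxHeartbeats 1000000
set_option synthInstance.maxHeartbeats 400000

/-- The degree-`i` homogeneous component of the coordinate ring `R_X = S/I`. -/
noncomputable def coordPiece (K : Type) [Field K] (n : ℕ)
    (I : Ideal (MvPolynomial (Fin (n + 1)) K)) (i : ℕ) :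
    Submodule K (MvPolynomial (Fin (n + 1)) K ⧸ I) :=
  Submodule.span K {g | ∃ f : MvPolynomial (Fin (n + 1)) K,
    f.IsHomogeneous i ∧ g = Ideal.Quotient.mk I f}

/-- The degree-`i` homogeneous component of `Ω¹_{R_X/K}`:
spanned over `K` by the elements `f̄·dx_t` with `f` homogeneous of degree `i-1`. -/
noncomputable def omega1Piece (K : Type) [Field K] (n : ℕ)
    (I : Ideal (MvPolynomial (Fin (n + 1)) K)) (i : ℕ) :
    Submodule K (Ω[(MvPolynomial (Fin (n + 1)) K ⧸ I)⁄K]) :=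
  Submodule.span K {w | ∃ (j : ℕ) (f : MvPolynomial (Fin (n + 1)) K) (t : Fin (n + 1)),
    i = j + 1 ∧ f.IsHomogeneous j ∧
    w = Ideal.Quotient.mk I f •
      KaehlerDifferential.D K (MvPolynomial (Fin (n + 1)) K ⧸ I)
        (Ideal.Quotient.mk I (MvPolynomial.X t))}

/-- The degree-`i` homogeneous component of the relative Kähler differential
module `Ω¹_{R_X/K[x_0]}`, where `K[x_0]` is the subalgebra of `R_X` generated
by `x_0`. -/
noncomputable def relOmega1Piece (K : Type) [Field K] (n : ℕ)
    (I : Ideal (MvPolynomial (Fin (n + 1)) K)) (i : ℕ) :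
    Submodule K (Ω[(MvPolynomial (Fin (n + 1)) K ⧸ I)⁄
      ↥(Algebra.adjoin K ({Ideal.Quotient.mk I (MvPolynomial.X 0)} :
        Set (MvPolynomial (Fin (n + 1)) K ⧸ I)))]) :=
  Submodule.span K {w | ∃ (j : ℕ) (f : MvPolynomial (Fin (n + 1)) K) (t : Fin (n + 1)),
    i = j + 1 ∧ f.IsHomogeneous j ∧
    w = Ideal.Quotient.mk I f •
      KaehlerDifferential.D
        (↥(Algebra.adjoin K ({Ideal.Quotient.mk I (MvPolynomial.X 0)} :
          Set (MvPolynomial (Fin (n + 1)) K ⧸ I))))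
        (MvPolynomial (Fin (n + 1)) K ⧸ I)
        (Ideal.Quotient.mk I (MvPolynomial.X t))}


variable {K : Type} [Field K] {n : ℕ}

/-- The Euler operator `f ↦ ∑ xᵢ ∂f/∂xᵢ` as a `K`-linear map. -/
noncomputable def eulerOp (K : Type) [Field K] (n : ℕ) :
    MvPolynomial (Fin (n + 1)) K →ₗ[K] MvPolynomial (Fin (n + 1)) K :=
  ∑ t : Fin (n + 1), (LinearMap.mulLeft K (X t)) ∘ₗ (pderiv t).toLinearMap

lemma eulerOp_apply (f : MvPolynomial (Fin (n + 1)) K) :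
    eulerOp K n f = ∑ t : Fin (n + 1), X t * pderiv t f := by
  simp [eulerOp, LinearMap.sum_apply]

lemma X_mul_pderiv_monomial (t : Fin (n + 1)) (m : Fin (n + 1) →₀ ℕ) (a : K) :
    X t * pderiv t (monomial m a) = (m t) • monomial m a := by
  rw [pderiv_monomial]
  rw [X, monomial_mul]
  rcases Nat.eq_zero_or_pos (m t) with h | h
  · simp [h]
  · have : Finsupp.single t 1 + (m - Finsupp.single t 1) = m := by
      ext s
      rcases eq_or_ne s t with rfl | hs
      · simp [Finsupp.single_apply]; omega
      · simp [Finsupp.single_apply, hs.symm]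
    rw [this, one_mul, smul_monomial]
    congr 1
    rw [nsmul_eq_mul, mul_comm]

lemma eulerOp_monomial (m : Fin (n + 1) →₀ ℕ) (a : K) :
    eulerOp K n (monomial m a) = (m.sum fun _ e => e) • monomial m a := by
  rw [eulerOp_apply]
  rw [Finset.sum_congr rfl fun t _ => X_mul_pderiv_monomial t m a]
  rw [← Finset.sum_smul]
  congr 1
  rw [Finsupp.sum]
  exact (Finset.sum_subset (Finset.subset_univ _) (by
    intro x _ hx
    simpa using Finsupp.notMem_support_iff.mp hx)).symm

lemma eulerOp_isHomogeneous {d : ℕ} {f : MvPolynomial (Fin (n + 1)) K}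
    (hf : f.IsHomogeneous d) : eulerOp K n f = d • f := by
  conv_lhs => rw [f.as_sum]
  rw [map_sum]
  conv_rhs => rw [f.as_sum, Finset.smul_sum]
  refine Finset.sum_congr rfl fun m hm => ?_
  rw [eulerOp_monomial]
  congr 1
  have := hf (mem_support_iff.mp hm)
  rw [← this, show (Finsupp.weight 1 : (Fin (n + 1) →₀ ℕ) →+ ℕ) = Finsupp.weight (fun _ => 1) from rfl,
    ← Finsupp.degree_eq_weight_one]
  rfl

lemma eulerOp_X (t : Fin (n + 1)) : eulerOp K n (X t) = X t := by
  have : (X t : MvPolynomial (Fin (n + 1)) K).IsHomogeneous 1 := isHomogeneous_X K t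
  rw [eulerOp_isHomogeneous this, one_smul]

lemma eulerOp_one : eulerOp K n (1 : MvPolynomial (Fin (n + 1)) K) = 0 := by
  have : (1 : MvPolynomial (Fin (n + 1)) K).IsHomogeneous 0 := isHomogeneous_one _ _
  rw [eulerOp_isHomogeneous this, zero_smul]

lemma eulerOp_mul (f g : MvPolynomial (Fin (n + 1)) K) :
    eulerOp K n (f * g) = f * eulerOp K n g + g * eulerOp K n f := by
  simp only [eulerOp_apply, Finset.mul_sum]
  rw [← Finset.sum_add_distrib]
  refine Finset.sum_congr rfl fun t _ => ?_
  rw [pderiv_mul]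
  ring

lemma eulerOp_mem {I : Ideal (MvPolynomial (Fin (n + 1)) K)}
    (hI : ∀ f ∈ I, ∀ d : ℕ, MvPolynomial.homogeneousComponent d f ∈ I)
    {f : MvPolynomial (Fin (n + 1)) K} (hf : f ∈ I) : eulerOp K n f ∈ I := by
  rw [show eulerOp K n f = eulerOp K n (∑ i ∈ Finset.range (f.totalDegree + 1),
      homogeneousComponent i f) by rw [f.sum_homogeneousComponent], map_sum]
  refine Ideal.sum_mem _ fun d _ => ?_
  rw [eulerOp_isHomogeneous (homogeneousComponent_isHomogeneous d f)]
  exact Submodule.smul_of_tower_mem _ _ (hI f hf d)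

variable (K n) in
/-- The Euler derivation descends to `R = S/I`. -/
noncomputable def eulerLin (I : Ideal (MvPolynomial (Fin (n + 1)) K))
    (hI : ∀ f ∈ I, ∀ d : ℕ, MvPolynomial.homogeneousComponent d f ∈ I) :
    (MvPolynomial (Fin (n + 1)) K ⧸ I) →ₗ[K] (MvPolynomial (Fin (n + 1)) K ⧸ I) :=
  (Submodule.liftQ (I.restrictScalars K)
    ((Ideal.Quotient.mkₐ K I).toLinearMap ∘ₗ eulerOp K n)
    (fun x hx => by
      simp only [LinearMap.mem_ker, LinearMap.comp_apply, AlgHom.toLinearMap_apply,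
        Ideal.Quotient.mkₐ_eq_mk]
      rw [Ideal.Quotient.eq_zero_iff_mem]
      exact eulerOp_mem hI hx)) ∘ₗ
  (Submodule.Quotient.restrictScalarsEquiv K (I : Submodule _ _)).symm.toLinearMap

lemma eulerLin_mk (I : Ideal (MvPolynomial (Fin (n + 1)) K))
    (hI : ∀ f ∈ I, ∀ d : ℕ, MvPolynomial.homogeneousComponent d f ∈ I)
    (f : MvPolynomial (Fin (n + 1)) K) :
    eulerLin K n I hI (Ideal.Quotient.mk I f) = Ideal.Quotient.mk I (eulerOp K n f) := by
  have h1 : Ideal.Quotient.mk I f = Submodule.Quotient.mk (p := (I : Submodule _ _)) f := rfl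
  rw [eulerLin, LinearMap.comp_apply, LinearEquiv.coe_toLinearMap, h1,
    Submodule.Quotient.restrictScalarsEquiv_symm_mk, Submodule.liftQ_apply]
  rfl

variable (K n) in
/-- The Euler derivation on `R = S/I`. -/
noncomputable def eulerDer (I : Ideal (MvPolynomial (Fin (n + 1)) K))
    (hI : ∀ f ∈ I, ∀ d : ℕ, MvPolynomial.homogeneousComponent d f ∈ I) :
    Derivation K (MvPolynomial (Fin (n + 1)) K ⧸ I) (MvPolynomial (Fin (n + 1)) K ⧸ I) where
  toLinearMap := eulerLin K n I hI
  map_one_eq_zero' := by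
    have : (1 : MvPolynomial (Fin (n + 1)) K ⧸ I) = Ideal.Quotient.mk I 1 := rfl
    rw [this, eulerLin_mk, eulerOp_one, map_zero]
  leibniz' := by
    intro a b
    obtain ⟨f, rfl⟩ := Ideal.Quotient.mk_surjective a
    obtain ⟨g, rfl⟩ := Ideal.Quotient.mk_surjective b
    rw [← map_mul, eulerLin_mk, eulerLin_mk, eulerLin_mk, eulerOp_mul, map_add, map_mul, map_mul]
    simp [smul_eq_mul]

lemma eulerDer_mk (I : Ideal (MvPolynomial (Fin (n + 1)) K))
    (hI : ∀ f ∈ I, ∀ d : ℕ, MvPolynomial.homogeneousComponent d f ∈ I)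
    (f : MvPolynomial (Fin (n + 1)) K) :
    eulerDer K n I hI (Ideal.Quotient.mk I f) = Ideal.Quotient.mk I (eulerOp K n f) :=
  eulerLin_mk I hI f

variable (K n) in
/-- Contraction `γ : Ω¹_{R/K} → R` with the Euler vector field. -/
noncomputable def eulerContr (I : Ideal (MvPolynomial (Fin (n + 1)) K))
    (hI : ∀ f ∈ I, ∀ d : ℕ, MvPolynomial.homogeneousComponent d f ∈ I) :
    (Ω[(MvPolynomial (Fin (n + 1)) K ⧸ I)⁄K]) →ₗ[MvPolynomial (Fin (n + 1)) K ⧸ I]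
      (MvPolynomial (Fin (n + 1)) K ⧸ I) :=
  (eulerDer K n I hI).liftKaehlerDifferential

lemma eulerContr_D (I : Ideal (MvPolynomial (Fin (n + 1)) K))
    (hI : ∀ f ∈ I, ∀ d : ℕ, MvPolynomial.homogeneousComponent d f ∈ I)
    (f : MvPolynomial (Fin (n + 1)) K) :
    eulerContr K n I hI (KaehlerDifferential.D K _ (Ideal.Quotient.mk I f)) =
      Ideal.Quotient.mk I (eulerOp K n f) := by
  rw [eulerContr, Derivation.liftKaehlerDifferential_comp_D]
  exact eulerDer_mk I hI f

/-- Part 1: annihilator of `dx₀` is zero. -/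
lemma ann_dx0 (I : Ideal (MvPolynomial (Fin (n + 1)) K))
    (hI : ∀ f ∈ I, ∀ d : ℕ, MvPolynomial.homogeneousComponent d f ∈ I)
    (hx0 : ∀ r : MvPolynomial (Fin (n + 1)) K ⧸ I,
      Ideal.Quotient.mk I (MvPolynomial.X 0) * r = 0 → r = 0)
    (f : MvPolynomial (Fin (n + 1)) K ⧸ I)
    (hf : f • KaehlerDifferential.D K (MvPolynomial (Fin (n + 1)) K ⧸ I)
        (Ideal.Quotient.mk I (MvPolynomial.X 0)) = 0) : f = 0 := by
  have := congrArg (eulerContr K n I hI) hf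
  rw [map_smul, map_zero, eulerContr_D, eulerOp_X, smul_eq_mul] at this
  exact hx0 f (by rw [mul_comm]; exact this)

section Adjoin

variable {A : Type} [CommRing A] [Algebra K A] (x : A)

/-- `Ω[adjoin K {x} / K]` is spanned by `D x`. -/
lemma span_D_adjoin_singleton :
    Submodule.span (Algebra.adjoin K ({x} : Set A)) {KaehlerDifferential.D K
      (Algebra.adjoin K ({x} : Set A)) ⟨x, Algebra.self_mem_adjoin_singleton K x⟩} = ⊤ := by
  set A' := Algebra.adjoin K ({x} : Set A)
  set x' : A' := ⟨x, Algebra.self_mem_adjoin_singleton K x⟩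
  set p := Submodule.span A' {KaehlerDifferential.D K A' x'}
  have hT : ∀ a : A', KaehlerDifferential.D K A' a ∈ p := by
    intro a
    have ha : a ∈ Algebra.adjoin K (Subtype.val ⁻¹' ({x} : Set A)) := by
      rw [Algebra.adjoin_adjoin_coe_preimage (R := K) (s := ({x} : Set A))]
      trivial
    induction ha using Algebra.adjoin_induction with
    | mem b hb =>
      have : b = x' := Subtype.ext hb
      rw [this]
      exact Submodule.subset_span rfl
    | algebraMap c =>
      rw [Derivation.map_algebraMap]
      exact Submodule.zero_mem _
    | add b c _ _ hb hc =>
      rw [map_add]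
      exact Submodule.add_mem _ hb hc
    | mul b c _ _ hb hc =>
      rw [Derivation.leibniz]
      exact Submodule.add_mem _ (Submodule.smul_mem _ _ hc) (Submodule.smul_mem _ _ hb)
  rw [eq_top_iff, ← KaehlerDifferential.span_range_derivation, Submodule.span_le]
  rintro _ ⟨a, rfl⟩
  exact hT a

/-- The kernel of `Ω[A/K] → Ω[A / K[x]]` is the `A`-span of `dx`. -/
lemma ker_map_adjoin_singleton :
    LinearMap.ker (KaehlerDifferential.map K (Algebra.adjoin K ({x} : Set A)) A A) =
      Submodule.span A {KaehlerDifferential.D K A x} := by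
  set A' := Algebra.adjoin K ({x} : Set A)
  set x' : A' := ⟨x, Algebra.self_mem_adjoin_singleton K x⟩
  rw [← KaehlerDifferential.range_mapBaseChange]
  apply le_antisymm
  · rintro _ ⟨y, rfl⟩
    induction y with
    | zero => simp only [map_zero]; exact Submodule.zero_mem _
    | add u v hu hv => rw [map_add]; exact Submodule.add_mem _ hu hv
    | tmul b w =>
      rw [KaehlerDifferential.mapBaseChange_tmul]
      refine Submodule.smul_mem _ _ ?_
      have hw : w ∈ Submodule.span A' {KaehlerDifferential.D K A' x'} := by
        rw [span_D_adjoin_singleton]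
        trivial
      induction hw using Submodule.span_induction with
      | mem v hv =>
        rw [Set.mem_singleton_iff] at hv
        subst hv
        rw [KaehlerDifferential.map_D]
        exact Submodule.subset_span rfl
      | zero => rw [map_zero]; exact Submodule.zero_mem _
      | add u v _ _ hu hv => rw [map_add]; exact Submodule.add_mem _ hu hv
      | smul a v _ hv =>
        rw [map_smul]
        rw [algebra_compatible_smul A a]
        exact Submodule.smul_mem _ _ hv
  · rw [Submodule.span_le]
    rintro _ rfl
    refine ⟨(1 : A) ⊗ₜ KaehlerDifferential.D K A' x', ?_⟩
    rw [KaehlerDifferential.mapBaseChange_tmul, one_smul, KaehlerDifferential.map_D]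
    rfl

end Adjoin


instance homogFD (j : ℕ) : FiniteDimensional K (homogeneousSubmodule (Fin (n + 1)) K j) :=
  Submodule.finiteDimensional_of_le (S₂ := restrictTotalDegree (Fin (n + 1)) K j)
    (fun p hp => (mem_restrictTotalDegree _ _ _).mpr
      ((mem_homogeneousSubmodule _ _).mp hp).totalDegree_le)

variable (K n) in
/-- `f ↦ (mk f) • v` as a `K`-linear map. -/
noncomputable def smulLin (I : Ideal (MvPolynomial (Fin (n + 1)) K)) {M : Type}
    [AddCommGroup M] [Module K M] [Module (MvPolynomial (Fin (n + 1)) K ⧸ I) M]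
    [IsScalarTower K (MvPolynomial (Fin (n + 1)) K ⧸ I) M] (v : M) :
    MvPolynomial (Fin (n + 1)) K →ₗ[K] M :=
  ((LinearMap.toSpanSingleton (MvPolynomial (Fin (n + 1)) K ⧸ I) M v).restrictScalars K) ∘ₗ
    (Ideal.Quotient.mkₐ K I).toLinearMap

@[simp] lemma smulLin_apply (I : Ideal (MvPolynomial (Fin (n + 1)) K)) {M : Type}
    [AddCommGroup M] [Module K M] [Module (MvPolynomial (Fin (n + 1)) K ⧸ I) M]
    [IsScalarTower K (MvPolynomial (Fin (n + 1)) K ⧸ I) M] (v : M)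
    (f : MvPolynomial (Fin (n + 1)) K) :
    smulLin K n I v f = Ideal.Quotient.mk I f • v := rfl

lemma piece_eq (I : Ideal (MvPolynomial (Fin (n + 1)) K)) {M : Type}
    [AddCommGroup M] [Module K M] [Module (MvPolynomial (Fin (n + 1)) K ⧸ I) M]
    [IsScalarTower K (MvPolynomial (Fin (n + 1)) K ⧸ I) M]
    (v : Fin (n + 1) → M) (j : ℕ) :
    Submodule.span K {w | ∃ (j' : ℕ) (f : MvPolynomial (Fin (n + 1)) K) (t : Fin (n + 1)),
      j + 1 = j' + 1 ∧ f.IsHomogeneous j' ∧ w = Ideal.Quotient.mk I f • v t} =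
    ⨆ t : Fin (n + 1), Submodule.map (smulLin K n I (v t))
      (homogeneousSubmodule (Fin (n + 1)) K j) := by
  have hset : {w | ∃ (j' : ℕ) (f : MvPolynomial (Fin (n + 1)) K) (t : Fin (n + 1)),
      j + 1 = j' + 1 ∧ f.IsHomogeneous j' ∧ w = Ideal.Quotient.mk I f • v t} =
      ⋃ t : Fin (n + 1), (smulLin K n I (v t)) '' (homogeneousSubmodule (Fin (n + 1)) K j) := by
    ext w
    simp only [Set.mem_setOf_eq, Set.mem_iUnion, Set.mem_image, SetLike.mem_coe,
      mem_homogeneousSubmodule, smulLin_apply]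
    constructor
    · rintro ⟨j', f, t, hj, hf, rfl⟩
      have : j' = j := by omega
      subst this
      exact ⟨t, f, hf, rfl⟩
    · rintro ⟨t, f, hf, rfl⟩
      exact ⟨j, f, t, rfl, hf, rfl⟩
  rw [hset, Submodule.span_iUnion]
  congr 1
  ext t
  rw [Submodule.span_image, Submodule.span_eq]

lemma coordPiece_eq (I : Ideal (MvPolynomial (Fin (n + 1)) K)) (j : ℕ) :
    coordPiece K n I j = Submodule.map ((Ideal.Quotient.mkₐ K I).toLinearMap)
      (homogeneousSubmodule (Fin (n + 1)) K j) := by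
  rw [coordPiece]
  have hset : {g | ∃ f : MvPolynomial (Fin (n + 1)) K,
      f.IsHomogeneous j ∧ g = Ideal.Quotient.mk I f} =
      ((Ideal.Quotient.mkₐ K I).toLinearMap) '' (homogeneousSubmodule (Fin (n + 1)) K j) := by
    ext g
    simp only [Set.mem_setOf_eq, Set.mem_image, SetLike.mem_coe, mem_homogeneousSubmodule,
      AlgHom.toLinearMap_apply, Ideal.Quotient.mkₐ_eq_mk]
    exact ⟨fun ⟨f, hf, hg⟩ => ⟨f, hf, hg.symm⟩, fun ⟨f, hf, hg⟩ => ⟨f, hf, hg.symm⟩⟩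
  rw [hset, Submodule.span_image, Submodule.span_eq]

lemma homogComp_X_mul (t : Fin (n + 1)) (g : MvPolynomial (Fin (n + 1)) K) (j : ℕ) :
    homogeneousComponent (j + 1) (X t * g) = X t * homogeneousComponent j g := by
  rw [show X t * g = ∑ d ∈ Finset.range (g.totalDegree + 1), X t * homogeneousComponent d g by
    rw [← Finset.mul_sum, sum_homogeneousComponent], map_sum]
  have each : ∀ d : ℕ, homogeneousComponent (j + 1) (X t * homogeneousComponent d g) =
      if j + 1 = d + 1 then X t * homogeneousComponent d g else 0 := by
    intro d
    have hh : (X t * homogeneousComponent d g).IsHomogeneous (d + 1) := by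
      have h2 := (isHomogeneous_X K t).mul (homogeneousComponent_isHomogeneous d g)
      rw [Nat.add_comm d 1]
      exact h2
    exact homogeneousComponent_of_mem hh
  rw [Finset.sum_congr rfl fun d _ => each d]
  have : ∀ d : ℕ, (if j + 1 = d + 1 then X t * homogeneousComponent d g else 0) =
      if d = j then X t * homogeneousComponent d g else 0 := by
    intro d
    congr 1
    simp only [Nat.add_right_cancel_iff, eq_comm]
  rw [Finset.sum_congr rfl fun d _ => this d, Finset.sum_ite_eq']
  by_cases hj : j ∈ Finset.range (g.totalDegree + 1)
  · rw [if_pos hj]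
  · rw [if_neg hj]
    rw [homogeneousComponent_eq_zero _ _ (by simpa using hj), mul_zero]

lemma omega1Piece_eq (I : Ideal (MvPolynomial (Fin (n + 1)) K)) (j : ℕ) :
    omega1Piece K n I (j + 1) = ⨆ t : Fin (n + 1), Submodule.map
      (smulLin K n I (KaehlerDifferential.D K (MvPolynomial (Fin (n + 1)) K ⧸ I)
        (Ideal.Quotient.mk I (X t))))
      (homogeneousSubmodule (Fin (n + 1)) K j) := by
  rw [omega1Piece]
  exact piece_eq I (fun t => KaehlerDifferential.D K (MvPolynomial (Fin (n + 1)) K ⧸ I)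
    (Ideal.Quotient.mk I (X t))) j

lemma relOmega1Piece_eq (I : Ideal (MvPolynomial (Fin (n + 1)) K)) (j : ℕ) :
    relOmega1Piece K n I (j + 1) = ⨆ t : Fin (n + 1), Submodule.map
      (smulLin K n I (KaehlerDifferential.D
        (↥(Algebra.adjoin K ({Ideal.Quotient.mk I (MvPolynomial.X 0)} :
          Set (MvPolynomial (Fin (n + 1)) K ⧸ I))))
        (MvPolynomial (Fin (n + 1)) K ⧸ I)
        (Ideal.Quotient.mk I (X t))))
      (homogeneousSubmodule (Fin (n + 1)) K j) := by
  rw [relOmega1Piece]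
  exact piece_eq I (fun t => KaehlerDifferential.D
    (↥(Algebra.adjoin K ({Ideal.Quotient.mk I (MvPolynomial.X 0)} :
      Set (MvPolynomial (Fin (n + 1)) K ⧸ I))))
    (MvPolynomial (Fin (n + 1)) K ⧸ I) (Ideal.Quotient.mk I (X t))) j

instance omega1Piece_fd (I : Ideal (MvPolynomial (Fin (n + 1)) K)) (j : ℕ) :
    FiniteDimensional K (omega1Piece K n I (j + 1)) := by
  rw [omega1Piece_eq]
  infer_instance

section Main

variable (I : Ideal (MvPolynomial (Fin (n + 1)) K))

variable (K n) in
/-- `r ↦ r • dx₀` as a `K`-linear map. -/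
noncomputable def psiMap :
    (MvPolynomial (Fin (n + 1)) K ⧸ I) →ₗ[K] Ω[(MvPolynomial (Fin (n + 1)) K ⧸ I)⁄K] :=
  (LinearMap.toSpanSingleton (MvPolynomial (Fin (n + 1)) K ⧸ I) _
    (KaehlerDifferential.D K (MvPolynomial (Fin (n + 1)) K ⧸ I)
      (Ideal.Quotient.mk I (X 0)))).restrictScalars K

@[simp] lemma psiMap_apply (r : MvPolynomial (Fin (n + 1)) K ⧸ I) :
    psiMap K n I r = r • KaehlerDifferential.D K (MvPolynomial (Fin (n + 1)) K ⧸ I)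
      (Ideal.Quotient.mk I (X 0)) := rfl

variable (K n) in
/-- The projection `Ω¹_{R/K} → Ω¹_{R/K[x₀]}`. -/
noncomputable def piMap :
    Ω[(MvPolynomial (Fin (n + 1)) K ⧸ I)⁄K] →ₗ[MvPolynomial (Fin (n + 1)) K ⧸ I]
      Ω[(MvPolynomial (Fin (n + 1)) K ⧸ I)⁄
        ↥(Algebra.adjoin K ({Ideal.Quotient.mk I (MvPolynomial.X 0)} :
          Set (MvPolynomial (Fin (n + 1)) K ⧸ I)))] :=
  KaehlerDifferential.map K
    (↥(Algebra.adjoin K ({Ideal.Quotient.mk I (MvPolynomial.X 0)} :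
      Set (MvPolynomial (Fin (n + 1)) K ⧸ I))))
    (MvPolynomial (Fin (n + 1)) K ⧸ I) (MvPolynomial (Fin (n + 1)) K ⧸ I)

lemma ker_piMap :
    LinearMap.ker (piMap K n I) = Submodule.span (MvPolynomial (Fin (n + 1)) K ⧸ I)
      {KaehlerDifferential.D K (MvPolynomial (Fin (n + 1)) K ⧸ I)
        (Ideal.Quotient.mk I (X 0))} :=
  ker_map_adjoin_singleton (Ideal.Quotient.mk I (X 0))

lemma piMap_D (f : MvPolynomial (Fin (n + 1)) K) :
    piMap K n I (KaehlerDifferential.D K (MvPolynomial (Fin (n + 1)) K ⧸ I)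
      (Ideal.Quotient.mk I f)) =
    KaehlerDifferential.D
      (↥(Algebra.adjoin K ({Ideal.Quotient.mk I (MvPolynomial.X 0)} :
        Set (MvPolynomial (Fin (n + 1)) K ⧸ I))))
      (MvPolynomial (Fin (n + 1)) K ⧸ I) (Ideal.Quotient.mk I f) :=
  KaehlerDifferential.map_D K _ _ _ _

lemma range_piMap_piece (j : ℕ) :
    Submodule.map ((piMap K n I).restrictScalars K) (omega1Piece K n I (j + 1)) =
      relOmega1Piece K n I (j + 1) := by
  rw [omega1Piece_eq, Submodule.map_iSup, relOmega1Piece_eq]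
  refine iSup_congr fun t => ?_
  rw [← Submodule.map_comp]
  congr 1
  apply LinearMap.ext
  intro f
  simp only [LinearMap.comp_apply, smulLin_apply, LinearMap.coe_restrictScalars]
  rw [map_smul]
  congr 1
  exact piMap_D I (X t)

lemma piMap_D_x0 :
    piMap K n I (KaehlerDifferential.D K (MvPolynomial (Fin (n + 1)) K ⧸ I)
      (Ideal.Quotient.mk I (X 0))) = 0 := by
  rw [piMap_D]
  exact Derivation.map_algebraMap
    (KaehlerDifferential.D
      (↥(Algebra.adjoin K ({Ideal.Quotient.mk I (MvPolynomial.X 0)} :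
        Set (MvPolynomial (Fin (n + 1)) K ⧸ I))))
      (MvPolynomial (Fin (n + 1)) K ⧸ I))
    ⟨Ideal.Quotient.mk I (X 0), Algebra.self_mem_adjoin_singleton K _⟩

lemma map_psiMap_le_piece (j : ℕ) :
    Submodule.map (psiMap K n I) (coordPiece K n I j) ≤ omega1Piece K n I (j + 1) := by
  rw [coordPiece_eq, ← Submodule.map_comp, omega1Piece_eq]
  have h0 : (psiMap K n I) ∘ₗ (Ideal.Quotient.mkₐ K I).toLinearMap =
      smulLin K n I (KaehlerDifferential.D K (MvPolynomial (Fin (n + 1)) K ⧸ I)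
        (Ideal.Quotient.mk I (X 0))) := rfl
  rw [h0]
  exact le_iSup (fun t : Fin (n + 1) => Submodule.map
    (smulLin K n I (KaehlerDifferential.D K (MvPolynomial (Fin (n + 1)) K ⧸ I)
      (Ideal.Quotient.mk I (X t))))
    (homogeneousSubmodule (Fin (n + 1)) K j)) 0

lemma eulerContr_piece (hI : ∀ f ∈ I, ∀ d : ℕ, MvPolynomial.homogeneousComponent d f ∈ I)
    (j : ℕ) (w : Ω[(MvPolynomial (Fin (n + 1)) K ⧸ I)⁄K])
    (hw : w ∈ omega1Piece K n I (j + 1)) :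
    eulerContr K n I hI w ∈ coordPiece K n I (j + 1) := by
  rw [omega1Piece] at hw
  induction hw using Submodule.span_induction with
  | mem w hw =>
    obtain ⟨j', f, t, hj, hf, rfl⟩ := hw
    rw [map_smul, eulerContr_D, eulerOp_X, smul_eq_mul, ← map_mul]
    refine Submodule.subset_span ⟨f * X t, ?_, rfl⟩
    rw [hj]
    exact hf.mul (isHomogeneous_X K t)
  | zero => rw [map_zero]; exact Submodule.zero_mem _
  | add u v _ _ hu hv => rw [map_add]; exact Submodule.add_mem _ hu hv
  | smul c u _ hu =>
    rw [LinearMap.map_smul_of_tower]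
    exact Submodule.smul_mem _ _ hu

lemma mem_ker_piece_iff (hI : ∀ f ∈ I, ∀ d : ℕ, MvPolynomial.homogeneousComponent d f ∈ I)
    (hx0 : ∀ r : MvPolynomial (Fin (n + 1)) K ⧸ I,
      Ideal.Quotient.mk I (MvPolynomial.X 0) * r = 0 → r = 0)
    (j : ℕ) (w : Ω[(MvPolynomial (Fin (n + 1)) K ⧸ I)⁄K])
    (hw : w ∈ omega1Piece K n I (j + 1)) :
    piMap K n I w = 0 ↔ w ∈ Submodule.map (psiMap K n I) (coordPiece K n I j) := by
  constructor
  · intro hx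
    have hxker : w ∈ LinearMap.ker (piMap K n I) := hx
    rw [ker_piMap, Submodule.mem_span_singleton] at hxker
    obtain ⟨r, hr⟩ := hxker
    have hγx : eulerContr K n I hI w = r * Ideal.Quotient.mk I (X 0) := by
      rw [← hr, map_smul, eulerContr_D, eulerOp_X, smul_eq_mul]
    have hmemC1 : r * Ideal.Quotient.mk I (X 0) ∈ coordPiece K n I (j + 1) := by
      rw [← hγx]
      exact eulerContr_piece I hI j w hw
    rw [coordPiece_eq] at hmemC1
    obtain ⟨h, hh, hmk⟩ := hmemC1
    simp only [AlgHom.toLinearMap_apply, Ideal.Quotient.mkₐ_eq_mk] at hmk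
    obtain ⟨g, hg⟩ := Ideal.Quotient.mk_surjective r
    have huI : X 0 * g - h ∈ I := by
      rw [← Ideal.Quotient.eq_zero_iff_mem, map_sub, map_mul, hg, hmk, mul_comm, sub_self]
    have hvI : X 0 * homogeneousComponent j g - h ∈ I := by
      have := hI _ huI (j + 1)
      rwa [map_sub, homogComp_X_mul, homogeneousComponent_of_mem hh, if_pos rfl] at this
    have hmk2 : Ideal.Quotient.mk I (X 0) * Ideal.Quotient.mk I (homogeneousComponent j g) =
        Ideal.Quotient.mk I (X 0) * r := by
      have h2 : Ideal.Quotient.mk I (X 0 * homogeneousComponent j g) =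
          Ideal.Quotient.mk I h := by
        rw [Ideal.Quotient.eq]
        exact hvI
      rw [← map_mul, h2, hmk, mul_comm]
    have hreq : Ideal.Quotient.mk I (homogeneousComponent j g) = r := by
      have h0 : Ideal.Quotient.mk I (X 0) *
          (Ideal.Quotient.mk I (homogeneousComponent j g) - r) = 0 := by
        rw [mul_sub, hmk2, sub_self]
      have := hx0 _ h0
      rwa [sub_eq_zero] at this
    refine ⟨Ideal.Quotient.mk I (homogeneousComponent j g), ?_, ?_⟩
    · exact Submodule.subset_span ⟨homogeneousComponent j g,
        homogeneousComponent_isHomogeneous j g, rfl⟩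
    · rw [psiMap_apply, hreq, hr]
  · rintro ⟨c, _, rfl⟩
    rw [psiMap_apply, map_smul, piMap_D_x0, smul_zero]

end Main

/-- Let `X ⊆ ℙⁿ` be a 0-dimensional scheme avoiding `Z⁺(X_0)`, so that `x_0`
is a non-zerodivisor on `R_X` (hypothesis `hx0`).  Then the annihilator of
`dx_0` in `Ω¹_{R_X/K}` is zero, and consequently
`HF_{Ω¹_{R_X/K[x_0]}}(i) = HF_{Ω¹_{R_X/K}}(i) - HF_X(i-1)` for all `i ≥ 1`
(the identity in degrees `i ≤ 0` being trivially `0 = 0 - 0`). -/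
theorem relative_kaehler_hilbert_function (K : Type) [Field K] [CharZero K] (n : ℕ)
    (I : Ideal (MvPolynomial (Fin (n + 1)) K))
    (hI : ∀ f ∈ I, ∀ d : ℕ, MvPolynomial.homogeneousComponent d f ∈ I)
    (hx0 : ∀ r : MvPolynomial (Fin (n + 1)) K ⧸ I,
      Ideal.Quotient.mk I (MvPolynomial.X 0) * r = 0 → r = 0) :
    (∀ f : MvPolynomial (Fin (n + 1)) K ⧸ I,
      f • KaehlerDifferential.D K (MvPolynomial (Fin (n + 1)) K ⧸ I)
          (Ideal.Quotient.mk I (MvPolynomial.X 0)) = 0 → f = 0) ∧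
    (∀ i : ℕ, 1 ≤ i →
      (Module.finrank K (relOmega1Piece K n I i) : ℤ) =
        (Module.finrank K (omega1Piece K n I i) : ℤ) -
          (Module.finrank K (coordPiece K n I (i - 1)) : ℤ)) := by
  refine ⟨ann_dx0 I hI hx0, ?_⟩
  intro i hi
  obtain ⟨j, rfl⟩ : ∃ j, i = j + 1 := ⟨i - 1, by omega⟩
  have hsub : j + 1 - 1 = j := rfl
  rw [hsub]
  have hψinj : Function.Injective (psiMap K n I) := by
    intro a b hab
    have h1 : (a - b) • KaehlerDifferential.D K (MvPolynomial (Fin (n + 1)) K ⧸ I)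
        (Ideal.Quotient.mk I (X 0)) = 0 := by
      rw [← psiMap_apply, map_sub, hab, sub_self]
    have := ann_dx0 I hI hx0 _ h1
    rwa [sub_eq_zero] at this
  set π' := ((piMap K n I).restrictScalars K) ∘ₗ (omega1Piece K n I (j + 1)).subtype with hπ'
  have hrange : LinearMap.range π' = relOmega1Piece K n I (j + 1) := by
    rw [hπ', LinearMap.range_comp, Submodule.range_subtype]
    exact range_piMap_piece I j
  have hker : LinearMap.ker π' = Submodule.comap (omega1Piece K n I (j + 1)).subtype
      (Submodule.map (psiMap K n I) (coordPiece K n I j)) := by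
    ext x
    simp only [LinearMap.mem_ker, Submodule.mem_comap, hπ', LinearMap.comp_apply,
      Submodule.subtype_apply, LinearMap.coe_restrictScalars]
    exact mem_ker_piece_iff I hI hx0 j x.1 x.2
  have e1 : Module.finrank K (LinearMap.ker π') = Module.finrank K (coordPiece K n I j) := by
    rw [hker]
    rw [LinearEquiv.finrank_eq (Submodule.comapSubtypeEquivOfLe (map_psiMap_le_piece I j))]
    exact (LinearEquiv.finrank_eq
      (Submodule.equivMapOfInjective (psiMap K n I) hψinj (coordPiece K n I j))).symm
  have e2 : Module.finrank K (LinearMap.range π') =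
      Module.finrank K (relOmega1Piece K n I (j + 1)) := by rw [hrange]
  have e3 := LinearMap.finrank_range_add_finrank_ker π'
  rw [e1, e2] at e3
  push_cast
  omega
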